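/- Let M be a matching with a separated layout and suppose that the largest ⋄-pattern contained in M has size k×k (that is, M contains a k-⋄-pattern but no (k+1)-⋄-pattern). Then the mixed page number of M satisfies k ≤ mn(M) ≤ 2k. -/

import Mathlib

/-!
Common framework: ordered graphs on vertex set `Fin n` (the vertex order is the
order of `Fin n`), with edges encoded as pairs `(u, v)` with `u < v`.
-/

namespace MixedLayouts

/-- An ordered graph: vertices `Fin n` (with their natural linear order),
edges given as ordered pairs `(u, v)` with `u < v`. -/
structure OGraph where
  n : ℕ
  E : Finset (Fin n × Fin n)
  lt_of_mem : ∀ e ∈ E, e.1 < e.2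

/-- Two edges `e = uv`, `f = xy` cross: `u ≺ x ≺ v ≺ y` (or symmetrically). -/
def Cross {n : ℕ} (e f : Fin n × Fin n) : Prop :=
  (e.1 < f.1 ∧ f.1 < e.2 ∧ e.2 < f.2) ∨ (f.1 < e.1 ∧ e.1 < f.2 ∧ f.2 < e.2)

/-- Two edges `e = uv`, `f = xy` nest: `u ≺ x ≺ y ≺ v` (or symmetrically). -/
def Nest {n : ℕ} (e f : Fin n × Fin n) : Prop :=
  (e.1 < f.1 ∧ f.2 < e.2) ∨ (f.1 < e.1 ∧ e.2 < f.2)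

/-- `e ↗ f`: both endpoints increase (for separated layouts this is crossing). -/
def Up {n : ℕ} (e f : Fin n × Fin n) : Prop := e.1 < f.1 ∧ e.2 < f.2

/-- `e ↘ f`: first endpoint increases, second decreases
(for separated layouts this means `f` nests inside `e`). -/
def Down {n : ℕ} (e f : Fin n × Fin n) : Prop := e.1 < f.1 ∧ f.2 < e.2

namespace OGraph

/-- Degree of a vertex. -/
def degree (G : OGraph) (v : Fin G.n) : ℕ :=
  (G.E.filter fun e => e.1 = v ∨ e.2 = v).card

/-- An ordered matching: every vertex has degree exactly one. -/
def IsMatching (G : OGraph) : Prop := ∀ v : Fin G.n, G.degree v = 1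

/-- A separated layout of a bipartite ordered graph: there is a threshold `t`
such that every edge goes from a vertex before `t` to a vertex from `t` on. -/
def Separated (G : OGraph) : Prop :=
  ∃ t : ℕ, ∀ e ∈ G.E, (e.1 : ℕ) < t ∧ t ≤ (e.2 : ℕ)

/-- An `s`-stack `q`-queue layout: a partition of the edges into `s` stacks
(pages `0, …, s-1`, pairwise non-crossing) and `q` queues
(pages `s, …, s+q-1`, pairwise non-nesting). -/
def HasLayout (G : OGraph) (s q : ℕ) : Prop :=
  ∃ c : Fin G.n × Fin G.n → ℕ,
    (∀ e ∈ G.E, c e < s + q) ∧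
    ∀ e ∈ G.E, ∀ f ∈ G.E, c e = c f →
      (c e < s → ¬ Cross e f) ∧ (s ≤ c e → ¬ Nest e f)

/-- The mixed page number: the minimum of `s + q` over all
`s`-stack `q`-queue layouts. -/
noncomputable def mn (G : OGraph) : ℕ :=
  sInf {m | ∃ s q, s + q = m ∧ G.HasLayout s q}

/-- A `t`-thick `k`-twist: `k` groups of `t` edges each, edges within a group
pairwise nest, edges from different groups pairwise cross. -/
def HasThickTwist (G : OGraph) (k t : ℕ) : Prop :=
  ∃ e : Fin k → Fin t → Fin G.n × Fin G.n,
    (∀ i j, e i j ∈ G.E) ∧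
    (Function.Injective fun p : Fin k × Fin t => e p.1 p.2) ∧
    (∀ i : Fin k, ∀ j j' : Fin t, j ≠ j' → Nest (e i j) (e i j')) ∧
    (∀ i i' : Fin k, ∀ j j' : Fin t, i ≠ i' → Cross (e i j) (e i' j'))

/-- A `t`-thick `k`-rainbow: `k` groups of `t` edges each, edges within a group
pairwise cross, edges from different groups pairwise nest. -/
def HasThickRainbow (G : OGraph) (k t : ℕ) : Prop :=
  ∃ e : Fin k → Fin t → Fin G.n × Fin G.n,
    (∀ i j, e i j ∈ G.E) ∧
    (Function.Injective fun p : Fin k × Fin t => e p.1 p.2) ∧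
    (∀ i : Fin k, ∀ j j' : Fin t, j ≠ j' → Cross (e i j) (e i j')) ∧
    (∀ i i' : Fin k, ∀ j j' : Fin t, i ≠ i' → Nest (e i j) (e i' j'))

/-- A `k`-thick pattern: a `k`-thick `k`-twist or a `k`-thick `k`-rainbow. -/
def HasThickPattern (G : OGraph) (k : ℕ) : Prop :=
  G.HasThickTwist k k ∨ G.HasThickRainbow k k

/-- `G` contains a `k`-⋄-pattern: `k²` edges `e i j` with
`e i j ↗ e i j'` for `j < j'` and `e i j ↘ e i' j` for `i < i'`. -/
def HasDiamond (G : OGraph) (k : ℕ) : Prop :=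
  ∃ e : Fin k → Fin k → Fin G.n × Fin G.n,
    (∀ i j, e i j ∈ G.E) ∧
    (Function.Injective fun p : Fin k × Fin k => e p.1 p.2) ∧
    (∀ i : Fin k, ∀ j j' : Fin k, j < j' → Up (e i j) (e i j')) ∧
    (∀ j : Fin k, ∀ i i' : Fin k, i < i' → Down (e i j) (e i' j))

/-- The edge set of `G` is exactly a `k`-⋄-pattern. -/
def FormsDiamond (G : OGraph) (k : ℕ) : Prop :=
  ∃ e : Fin k → Fin k → Fin G.n × Fin G.n,
    (Function.Injective fun p : Fin k × Fin k => e p.1 p.2) ∧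
    (∀ i : Fin k, ∀ j j' : Fin k, j < j' → Up (e i j) (e i j')) ∧
    (∀ j : Fin k, ∀ i i' : Fin k, i < i' → Down (e i j) (e i' j)) ∧
    G.E = Finset.image (fun p : Fin k × Fin k => e p.1 p.2) Finset.univ

/-- Delete an edge. -/
def erase (G : OGraph) (e : Fin G.n × Fin G.n) : OGraph :=
  ⟨G.n, G.E.erase e, fun f hf => G.lt_of_mem f (Finset.mem_of_mem_erase hf)⟩

/-- `(s,q)`-critical: no `s`-stack `q`-queue layout, but every one-edge-deleted
subgraph has one. -/
def IsSQCritical (G : OGraph) (s q : ℕ) : Prop :=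
  ¬ G.HasLayout s q ∧ ∀ e ∈ G.E, (G.erase e).HasLayout s q

/-- `k`-critical: `mn G > k`, but `mn (G - e) ≤ k` for every edge `e`. -/
def IsKCritical (G : OGraph) (k : ℕ) : Prop :=
  k < G.mn ∧ ∀ e ∈ G.E, (G.erase e).mn ≤ k

end OGraph

/-- An ordered graph `G` contains the pattern `H`: an order-preserving injection
of the vertices mapping edges to edges. -/
def Contains (G H : OGraph) : Prop :=
  ∃ φ : Fin H.n → Fin G.n, StrictMono φ ∧ ∀ e ∈ H.E, (φ e.1, φ e.2) ∈ G.E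

/-- A chain of the poset `P(M)` of a separated matching
(elements: edges; order: `↗`). -/
def IsPChain {n : ℕ} (C : Finset (Fin n × Fin n)) : Prop :=
  ∀ e ∈ C, ∀ f ∈ C, e ≠ f → Up e f ∨ Up f e

/-- An antichain of the poset `P(M)` of a separated matching. -/
def IsPAntichain {n : ℕ} (C : Finset (Fin n × Fin n)) : Prop :=
  ∀ e ∈ C, ∀ f ∈ C, e ≠ f → ¬ Up e f ∧ ¬ Up f e

/-- `c_i` for an abstract finite poset: the maximum number of elements
covered by `i` chains. -/
noncomputable def chainCover (α : Type) [Fintype α] [PartialOrder α] [DecidableEq α]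
    (i : ℕ) : ℕ :=
  sSup {m | ∃ C : Fin i → Finset α,
    (∀ j, IsChain (· ≤ ·) (C j : Set α)) ∧ (Finset.univ.biUnion C).card = m}

/-- `a_i` for an abstract finite poset: the maximum number of elements
covered by `i` antichains. -/
noncomputable def antichainCover (α : Type) [Fintype α] [PartialOrder α] [DecidableEq α]
    (i : ℕ) : ℕ :=
  sSup {m | ∃ A : Fin i → Finset α,
    (∀ j, IsAntichain (· ≤ ·) (A j : Set α)) ∧ (Finset.univ.biUnion A).card = m}

end MixedLayouts

namespace MixedLayouts


/-! ### Auxiliary development for Statement 0 -/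

namespace Aux

open OGraph

variable {n : ℕ}

/-! #### Basic facts about `Up`, `Down`, `Cross`, `Nest` -/

theorem up_trans {e f g : Fin n × Fin n} (h1 : Up e f) (h2 : Up f g) : Up e g :=
  ⟨lt_trans h1.1 h2.1, lt_trans h1.2 h2.2⟩

theorem down_trans {e f g : Fin n × Fin n} (h1 : Down e f) (h2 : Down f g) : Down e g :=
  ⟨lt_trans h1.1 h2.1, lt_trans h2.2 h1.2⟩

theorem up_down {e f : Fin n × Fin n} (h1 : Up e f) (h2 : Down e f) : False :=
  lt_asymm h1.2 h2.2

theorem up_down' {e f : Fin n × Fin n} (h1 : Up e f) (h2 : Down f e) : False :=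
  lt_asymm h1.1 h2.1

theorem up_asymm {e f : Fin n × Fin n} (h1 : Up e f) (h2 : Up f e) : False :=
  lt_asymm h1.1 h2.1

theorem down_asymm {e f : Fin n × Fin n} (h1 : Down e f) (h2 : Down f e) : False :=
  lt_asymm h1.1 h2.1

theorem up_irrefl {e : Fin n × Fin n} (h : Up e e) : False := lt_irrefl _ h.1

theorem down_irrefl {e : Fin n × Fin n} (h : Down e e) : False := lt_irrefl _ h.1

theorem down_ne {e f : Fin n × Fin n} (h : Down e f) : e ≠ f := by
  rintro rfl; exact down_irrefl h

theorem up_ne {e f : Fin n × Fin n} (h : Up e f) : e ≠ f := by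
  rintro rfl; exact up_irrefl h

theorem not_cross_self {e : Fin n × Fin n} : ¬ Cross e e := by
  rintro (⟨h, _⟩ | ⟨h, _⟩) <;> exact lt_irrefl _ h

theorem down_not_cross {e f : Fin n × Fin n} (h : Down e f) : ¬ Cross e f := by
  rintro (⟨_, _, h2⟩ | ⟨h1, _, _⟩)
  · exact lt_asymm h2 h.2
  · exact lt_asymm h1 h.1

theorem down_not_cross' {e f : Fin n × Fin n} (h : Down f e) : ¬ Cross e f := by
  rintro (⟨h1, _, _⟩ | ⟨_, _, h2⟩)
  · exact lt_asymm h1 h.1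
  · exact lt_asymm h2 h.2

theorem not_nest_self {e : Fin n × Fin n} : ¬ Nest e e := by
  rintro (⟨h, _⟩ | ⟨h, _⟩) <;> exact lt_irrefl _ h

theorem up_not_nest {e f : Fin n × Fin n} (h : Up e f) : ¬ Nest e f := by
  rintro (⟨_, h2⟩ | ⟨h1, _⟩)
  · exact lt_asymm h2 h.2
  · exact lt_asymm h1 h.1

theorem up_not_nest' {e f : Fin n × Fin n} (h : Up f e) : ¬ Nest e f := by
  rintro (⟨h1, _⟩ | ⟨_, h2⟩)
  · exact lt_asymm h1 h.1
  · exact lt_asymm h2 h.2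

theorem down_nest {e f : Fin n × Fin n} (h : Down e f) : Nest e f := Or.inl ⟨h.1, h.2⟩

/-- In a matching, distinct edges have distinct endpoints (on each side). -/
theorem matching_ne (M : OGraph) (hm : M.IsMatching) {e f : Fin M.n × Fin M.n}
    (he : e ∈ M.E) (hf : f ∈ M.E) (hne : e ≠ f) : e.1 ≠ f.1 ∧ e.2 ≠ f.2 := by
  constructor
  · intro hv
    have h1 : e ∈ M.E.filter (fun g => g.1 = e.1 ∨ g.2 = e.1) := by
      simp [Finset.mem_filter, he]
    have h2 : f ∈ M.E.filter (fun g => g.1 = e.1 ∨ g.2 = e.1) := by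
      simp [Finset.mem_filter, hf, hv.symm]
    have hcard : 1 < (M.E.filter (fun g => g.1 = e.1 ∨ g.2 = e.1)).card :=
      Finset.one_lt_card.mpr ⟨e, h1, f, h2, hne⟩
    have := hm e.1
    rw [OGraph.degree] at this
    omega
  · intro hv
    have h1 : e ∈ M.E.filter (fun g => g.1 = e.2 ∨ g.2 = e.2) := by
      simp [Finset.mem_filter, he]
    have h2 : f ∈ M.E.filter (fun g => g.1 = e.2 ∨ g.2 = e.2) := by
      simp [Finset.mem_filter, hf, hv.symm]
    have hcard : 1 < (M.E.filter (fun g => g.1 = e.2 ∨ g.2 = e.2)).card :=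
      Finset.one_lt_card.mpr ⟨e, h1, f, h2, hne⟩
    have := hm e.2
    rw [OGraph.degree] at this
    omega

/-- Trichotomy: two distinct edges of a separated matching are `Up`- or
`Down`-comparable. -/
theorem tri (M : OGraph) (hm : M.IsMatching) {e f : Fin M.n × Fin M.n}
    (he : e ∈ M.E) (hf : f ∈ M.E) (hne : e ≠ f) :
    Up e f ∨ Up f e ∨ Down e f ∨ Down f e := by
  obtain ⟨h1, h2⟩ := matching_ne M hm he hf hne
  rcases h1.lt_or_gt with ha | ha <;> rcases h2.lt_or_gt with hb | hb
  · exact Or.inl ⟨ha, hb⟩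
  · exact Or.inr (Or.inr (Or.inl ⟨ha, hb⟩))
  · exact Or.inr (Or.inr (Or.inr ⟨ha, hb⟩))
  · exact Or.inr (Or.inl ⟨ha, hb⟩)

/-- In a separated layout, `Up` edges cross. -/
theorem up_cross (M : OGraph) (hsep : M.Separated) {e f : Fin M.n × Fin M.n}
    (he : e ∈ M.E) (hf : f ∈ M.E) (h : Up e f) : Cross e f := by
  obtain ⟨t, ht⟩ := hsep
  refine Or.inl ⟨h.1, ?_, h.2⟩
  have h1 : (f.1 : ℕ) < t := (ht f hf).1
  have h2 : t ≤ (e.2 : ℕ) := (ht e he).2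
  exact Fin.lt_def.mpr (by omega)



instance (e f : Fin n × Fin n) : Decidable (Up e f) :=
  decidable_of_iff (e.1 < f.1 ∧ e.2 < f.2) Iff.rfl

instance (e f : Fin n × Fin n) : Decidable (Down e f) :=
  decidable_of_iff (e.1 < f.1 ∧ f.2 < e.2) Iff.rfl

/-! #### Chains and heights -/

/-- A `Down`-chain of length `m` inside `S` (`ℕ`-indexed). -/
def DChainN (S : Finset (Fin n × Fin n)) (m : ℕ) (g : ℕ → Fin n × Fin n) : Prop :=
  (∀ l, l < m → g l ∈ S) ∧ ∀ i j, i < j → j < m → Down (g i) (g j)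

/-- An `Up`-chain of length `m` inside `S` (`ℕ`-indexed). -/
def UChainN (S : Finset (Fin n × Fin n)) (m : ℕ) (g : ℕ → Fin n × Fin n) : Prop :=
  (∀ l, l < m → g l ∈ S) ∧ ∀ i j, i < j → j < m → Up (g i) (g j)

def NoDChain (S : Finset (Fin n × Fin n)) (m : ℕ) : Prop := ¬ ∃ g, DChainN S m g

def NoUChain (S : Finset (Fin n × Fin n)) (m : ℕ) : Prop := ¬ ∃ g, UChainN S m g

/-- `Down`-height of `e` within `S`. -/
def dh (S : Finset (Fin n × Fin n)) (e : Fin n × Fin n) : ℕ :=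
  ((S.filter fun f => Down f e).attach.sup fun f => dh S f.1) + 1
termination_by (e.1 : ℕ)
decreasing_by
  exact Fin.lt_def.mp (Finset.mem_filter.mp f.2).2.1

/-- `Up`-height of `e` within `S`. -/
def uh (S : Finset (Fin n × Fin n)) (e : Fin n × Fin n) : ℕ :=
  ((S.filter fun f => Up f e).attach.sup fun f => uh S f.1) + 1
termination_by (e.1 : ℕ)
decreasing_by
  exact Fin.lt_def.mp (Finset.mem_filter.mp f.2).2.1

theorem dh_pos (S : Finset (Fin n × Fin n)) (e : Fin n × Fin n) : 1 ≤ dh S e := by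
  rw [dh]; omega

theorem uh_pos (S : Finset (Fin n × Fin n)) (e : Fin n × Fin n) : 1 ≤ uh S e := by
  rw [uh]; omega

theorem dh_lt (S : Finset (Fin n × Fin n)) {e f : Fin n × Fin n} (hf : f ∈ S)
    (hd : Down f e) : dh S f < dh S e := by
  conv_rhs => rw [dh]
  have hmem : f ∈ S.filter fun g => Down g e := Finset.mem_filter.mpr ⟨hf, hd⟩
  have := Finset.le_sup (f := fun g : {x // x ∈ S.filter fun g => Down g e} => dh S g.1)
    (Finset.mem_attach _ ⟨f, hmem⟩)
  dsimp only at this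
  omega

theorem uh_lt (S : Finset (Fin n × Fin n)) {e f : Fin n × Fin n} (hf : f ∈ S)
    (hd : Up f e) : uh S f < uh S e := by
  conv_rhs => rw [uh]
  have hmem : f ∈ S.filter fun g => Up g e := Finset.mem_filter.mpr ⟨hf, hd⟩
  have := Finset.le_sup (f := fun g : {x // x ∈ S.filter fun g => Up g e} => uh S g.1)
    (Finset.mem_attach _ ⟨f, hmem⟩)
  dsimp only at this
  omega

/-- There is a `Down`-chain of length `dh S e` within `S` ending at `e`. -/
theorem dh_chain (S : Finset (Fin n × Fin n)) :
    ∀ (d : ℕ) (e : Fin n × Fin n), dh S e = d → e ∈ S →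
      ∃ g, DChainN S d g ∧ g (d - 1) = e := by
  intro d
  induction d using Nat.strong_induction_on with
  | _ d IH =>
    intro e hde he
    rcases Finset.eq_empty_or_nonempty (S.filter fun f => Down f e) with hemp | hne
    · have h1 : dh S e = 1 := by rw [dh, hemp]; simp
      refine ⟨fun _ => e, ⟨fun l hl => he, fun i j hij hj => ?_⟩, by simp⟩
      omega
    · have hne' : (S.filter fun f => Down f e).attach.Nonempty := hne.attach
      obtain ⟨f0, _, hf0⟩ := Finset.exists_mem_eq_sup _ hne'
        (fun g : {x // x ∈ S.filter fun g => Down g e} => dh S g.1)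
      have hf0S : f0.1 ∈ S := (Finset.mem_filter.mp f0.2).1
      have hf0d : Down f0.1 e := (Finset.mem_filter.mp f0.2).2
      have hdeq : dh S e = dh S f0.1 + 1 := by rw [dh, hf0]
      have hlt : dh S f0.1 < d := by omega
      obtain ⟨g, ⟨hg1, hg2⟩, hglast⟩ := IH _ hlt f0.1 rfl hf0S
      set d0 := dh S f0.1 with hd0
      have hd0pos : 1 ≤ d0 := dh_pos S f0.1
      refine ⟨fun l => if l < d0 then g l else e, ⟨?_, ?_⟩, ?_⟩
      · intro l hl
        by_cases h : l < d0 <;> simp [h, he, hg1 l]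
      · intro i j hij hj
        have hjd : j < d0 + 1 := by omega
        by_cases hjlt : j < d0
        · have : i < d0 := by omega
          simp only [this, hjlt, if_pos]
          exact hg2 i j hij hjlt
        · have hjeq : ¬ (j < d0) := hjlt
          have hid : i < d0 := by omega
          simp only [hid, hjeq, if_pos, if_neg, not_false_iff]
          rcases Nat.lt_or_ge i (d0 - 1) with hi1 | hi1
          · have : Down (g i) (g (d0 - 1)) := hg2 i (d0 - 1) hi1 (by omega)
            rw [hglast] at this
            exact down_trans this hf0d
          · have : i = d0 - 1 := by omega
            rw [this, hglast]
            exact hf0d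
      · have : ¬ (d - 1 < d0) := by omega
        simp [this]

/-- There is an `Up`-chain of length `uh S e` within `S` ending at `e`. -/
theorem uh_chain (S : Finset (Fin n × Fin n)) :
    ∀ (d : ℕ) (e : Fin n × Fin n), uh S e = d → e ∈ S →
      ∃ g, UChainN S d g ∧ g (d - 1) = e := by
  intro d
  induction d using Nat.strong_induction_on with
  | _ d IH =>
    intro e hde he
    rcases Finset.eq_empty_or_nonempty (S.filter fun f => Up f e) with hemp | hne
    · have h1 : uh S e = 1 := by rw [uh, hemp]; simp
      refine ⟨fun _ => e, ⟨fun l hl => he, fun i j hij hj => ?_⟩, by simp⟩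
      omega
    · have hne' : (S.filter fun f => Up f e).attach.Nonempty := hne.attach
      obtain ⟨f0, _, hf0⟩ := Finset.exists_mem_eq_sup _ hne'
        (fun g : {x // x ∈ S.filter fun g => Up g e} => uh S g.1)
      have hf0S : f0.1 ∈ S := (Finset.mem_filter.mp f0.2).1
      have hf0d : Up f0.1 e := (Finset.mem_filter.mp f0.2).2
      have hdeq : uh S e = uh S f0.1 + 1 := by rw [uh, hf0]
      have hlt : uh S f0.1 < d := by omega
      obtain ⟨g, ⟨hg1, hg2⟩, hglast⟩ := IH _ hlt f0.1 rfl hf0S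
      set d0 := uh S f0.1 with hd0
      have hd0pos : 1 ≤ d0 := uh_pos S f0.1
      refine ⟨fun l => if l < d0 then g l else e, ⟨?_, ?_⟩, ?_⟩
      · intro l hl
        by_cases h : l < d0 <;> simp [h, he, hg1 l]
      · intro i j hij hj
        have hjd : j < d0 + 1 := by omega
        by_cases hjlt : j < d0
        · have : i < d0 := by omega
          simp only [this, hjlt, if_pos]
          exact hg2 i j hij hjlt
        · have hjeq : ¬ (j < d0) := hjlt
          have hid : i < d0 := by omega
          simp only [hid, hjeq, if_pos, if_neg, not_false_iff]
          rcases Nat.lt_or_ge i (d0 - 1) with hi1 | hi1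
          · have : Up (g i) (g (d0 - 1)) := hg2 i (d0 - 1) hi1 (by omega)
            rw [hglast] at this
            exact up_trans this hf0d
          · have : i = d0 - 1 := by omega
            rw [this, hglast]
            exact hf0d
      · have : ¬ (d - 1 < d0) := by omega
        simp [this]

theorem dh_le (S : Finset (Fin n × Fin n)) {m : ℕ} (hS : NoDChain S (m + 1))
    {e : Fin n × Fin n} (he : e ∈ S) : dh S e ≤ m := by
  by_contra h
  obtain ⟨g, ⟨hg1, hg2⟩, _⟩ := dh_chain S (dh S e) e rfl he
  exact hS ⟨g, fun l hl => hg1 l (by omega), fun i j hij hj => hg2 i j hij (by omega)⟩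

theorem uh_le (S : Finset (Fin n × Fin n)) {m : ℕ} (hS : NoUChain S (m + 1))
    {e : Fin n × Fin n} (he : e ∈ S) : uh S e ≤ m := by
  by_contra h
  obtain ⟨g, ⟨hg1, hg2⟩, _⟩ := uh_chain S (uh S e) e rfl he
  exact hS ⟨g, fun l hl => hg1 l (by omega), fun i j hij hj => hg2 i j hij (by omega)⟩


/-! #### The lattice of `w`-antichains -/

/-- A `Down`-chain of length `w` in `P`, viewed as a maximum antichain. -/
def IsAC {w : ℕ} (P : Finset (Fin n × Fin n)) (X : Fin w → Fin n × Fin n) : Prop :=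
  (∀ i, X i ∈ P) ∧ ∀ i j : Fin w, i < j → Down (X i) (X j)

theorem ac_down_absurd {w : ℕ} {P : Finset (Fin n × Fin n)} (hP1 : NoDChain P (w + 1))
    {X Y : Fin w → Fin n × Fin n} (hX : IsAC P X) (hY : IsAC P Y) (i : Fin w)
    (hD : Down (X i) (Y i)) : False := by
  apply hP1
  refine ⟨fun l => if hl : l ≤ (i : ℕ) then X ⟨l, lt_of_le_of_lt hl i.isLt⟩
    else if hl2 : l - 1 < w then Y ⟨l - 1, hl2⟩ else X i, ?_, ?_⟩
  · intro l hl
    by_cases h : l ≤ (i : ℕ)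
    · simp only [h, dif_pos]; exact hX.1 _
    · have h2 : l - 1 < w := by omega
      simp only [h, h2, dif_neg, dif_pos, not_false_iff]; exact hY.1 _
  · intro a b hab hb
    have hiw := i.isLt
    by_cases ha : a ≤ (i : ℕ) <;> by_cases hbi : b ≤ (i : ℕ)
    · simp only [ha, hbi, dif_pos]
      exact hX.2 _ _ (Fin.mk_lt_mk.mpr hab)
    · have hb2 : b - 1 < w := by omega
      simp only [ha, hbi, hb2, dif_pos, dif_neg, not_false_iff]
      have step1 : X ⟨a, lt_of_le_of_lt ha i.isLt⟩ = X i ∨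
          Down (X ⟨a, lt_of_le_of_lt ha i.isLt⟩) (X i) := by
        rcases eq_or_lt_of_le ha with h | h
        · left; congr 1; exact Fin.ext h
        · right; exact hX.2 _ _ (Fin.lt_def.mpr h)
      have step3 : Y i = Y ⟨b - 1, hb2⟩ ∨ Down (Y i) (Y ⟨b - 1, hb2⟩) := by
        rcases Nat.lt_or_ge (i : ℕ) (b - 1) with h | h
        · right; exact hY.2 _ _ (Fin.lt_def.mpr h)
        · left; congr 1; exact Fin.ext (show (i : ℕ) = b - 1 by omega)
      have mid : Down (X ⟨a, lt_of_le_of_lt ha i.isLt⟩) (Y i) := by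
        rcases step1 with h | h
        · rwa [h]
        · exact down_trans h hD
      rcases step3 with h | h
      · rwa [← h]
      · exact down_trans mid h
    · omega
    · have ha2 : a - 1 < w := by omega
      have hb2 : b - 1 < w := by omega
      simp only [ha, hbi, ha2, hb2, dif_neg, dif_pos, not_false_iff]
      exact hY.2 _ _ (Fin.mk_lt_mk.mpr (by omega))

theorem ac_cmp {w : ℕ} {P : Finset (Fin n × Fin n)} (hP1 : NoDChain P (w + 1))
    (hTri : ∀ e ∈ P, ∀ f ∈ P, e ≠ f → Up e f ∨ Up f e ∨ Down e f ∨ Down f e)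
    {X Y : Fin w → Fin n × Fin n} (hX : IsAC P X) (hY : IsAC P Y) (i : Fin w) :
    X i = Y i ∨ Up (X i) (Y i) ∨ Up (Y i) (X i) := by
  by_cases heq : X i = Y i
  · exact Or.inl heq
  rcases hTri _ (hX.1 i) _ (hY.1 i) heq with h | h | h | h
  · exact Or.inr (Or.inl h)
  · exact Or.inr (Or.inr h)
  · exact absurd h (fun h => ac_down_absurd hP1 hX hY i h)
  · exact absurd h (fun h => ac_down_absurd hP1 hY hX i h)

/-- Pointwise join of two antichains. -/
def jn {w : ℕ} (X Y : Fin w → Fin n × Fin n) : Fin w → Fin n × Fin n := fun i =>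
  if Up (X i) (Y i) then Y i else X i

/-- Pointwise meet of two antichains. -/
def mt {w : ℕ} (X Y : Fin w → Fin n × Fin n) : Fin w → Fin n × Fin n := fun i =>
  if Up (X i) (Y i) then X i else Y i

section JnMt

variable {w : ℕ} {P : Finset (Fin n × Fin n)}
  {X Y : Fin w → Fin n × Fin n}


theorem jn_pair (i : Fin w) : jn X Y i = X i ∨ jn X Y i = Y i := by
  unfold jn; split <;> simp

theorem mt_pair (i : Fin w) : mt X Y i = X i ∨ mt X Y i = Y i := by
  unfold mt; split <;> simp

theorem jn_left (i : Fin w) : X i = jn X Y i ∨ Up (X i) (jn X Y i) := by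
  unfold jn; split
  · right; assumption
  · left; rfl

theorem jn_right (hP1 : NoDChain P (w + 1))
    (hTri : ∀ e ∈ P, ∀ f ∈ P, e ≠ f → Up e f ∨ Up f e ∨ Down e f ∨ Down f e) (hX : IsAC P X) (hY : IsAC P Y) (i : Fin w) :
    Y i = jn X Y i ∨ Up (Y i) (jn X Y i) := by
  unfold jn; split
  · left; rfl
  · rcases ac_cmp hP1 hTri hX hY i with h | h | h
    · left; exact h.symm
    · exact absurd h (by assumption)
    · right; exact h

theorem mt_left (hP1 : NoDChain P (w + 1))
    (hTri : ∀ e ∈ P, ∀ f ∈ P, e ≠ f → Up e f ∨ Up f e ∨ Down e f ∨ Down f e) (hX : IsAC P X) (hY : IsAC P Y) (i : Fin w) :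
    mt X Y i = X i ∨ Up (mt X Y i) (X i) := by
  unfold mt; split
  · left; rfl
  · rcases ac_cmp hP1 hTri hX hY i with h | h | h
    · left; exact h.symm
    · exact absurd h (by assumption)
    · right; exact h

theorem mt_right (i : Fin w) : mt X Y i = Y i ∨ Up (mt X Y i) (Y i) := by
  unfold mt; split
  · right; assumption
  · left; rfl

theorem jn_isac (hP1 : NoDChain P (w + 1))
    (hTri : ∀ e ∈ P, ∀ f ∈ P, e ≠ f → Up e f ∨ Up f e ∨ Down e f ∨ Down f e) (hX : IsAC P X) (hY : IsAC P Y) :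
    IsAC P (jn X Y) := by
  constructor
  · intro i; rcases jn_pair (X := X) (Y := Y) i with h | h <;> rw [h]
    exacts [hX.1 i, hY.1 i]
  · intro i j hij
    have hXij := hX.2 i j hij
    have hYij := hY.2 i j hij
    unfold jn
    by_cases h1 : Up (X i) (Y i) <;> by_cases h2 : Up (X j) (Y j) <;>
      simp only [h1, h2, if_pos, if_neg, not_false_iff]
    · exact hYij
    · -- Y at i, X at j
      rcases ac_cmp hP1 hTri hX hY j with h | h | h
      · rw [h]; exact hYij
      · exact absurd h h2
      · exact ⟨lt_of_lt_of_le hYij.1 (le_of_lt h.1), lt_trans hXij.2 h1.2⟩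
    · -- X at i, Y at j
      rcases ac_cmp hP1 hTri hX hY i with h | h | h
      · rw [h]; exact hYij
      · exact absurd h h1
      · exact ⟨lt_trans hXij.1 h2.1, lt_of_lt_of_le hYij.2 (le_of_lt h.2)⟩
    · exact hXij

theorem mt_isac (hP1 : NoDChain P (w + 1))
    (hTri : ∀ e ∈ P, ∀ f ∈ P, e ≠ f → Up e f ∨ Up f e ∨ Down e f ∨ Down f e) (hX : IsAC P X) (hY : IsAC P Y) :
    IsAC P (mt X Y) := by
  constructor
  · intro i; rcases mt_pair (X := X) (Y := Y) i with h | h <;> rw [h]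
    exacts [hX.1 i, hY.1 i]
  · intro i j hij
    have hXij := hX.2 i j hij
    have hYij := hY.2 i j hij
    unfold mt
    by_cases h1 : Up (X i) (Y i) <;> by_cases h2 : Up (X j) (Y j) <;>
      simp only [h1, h2, if_pos, if_neg, not_false_iff]
    · exact hXij
    · -- X at i, Y at j
      rcases ac_cmp hP1 hTri hX hY j with h | h | h
      · rw [← h]; exact hXij
      · exact absurd h h2
      · exact ⟨lt_trans h1.1 hYij.1, lt_of_le_of_lt (le_of_lt h.2) hXij.2⟩
    · -- Y at i, X at j
      rcases ac_cmp hP1 hTri hX hY i with h | h | h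
      · rw [← h]; exact hXij
      · exact absurd h h1
      · exact ⟨lt_of_le_of_lt (le_of_lt h.1) hXij.1, lt_trans h2.2 hYij.2⟩
    · exact hYij

end JnMt

/-- Sum of first coordinates, used as a measure on antichains. -/
def meas {w : ℕ} (X : Fin w → Fin n × Fin n) : ℕ := ∑ i, ((X i).1 : ℕ)

theorem meas_le {w : ℕ} {X Y : Fin w → Fin n × Fin n}
    (h : ∀ i, X i = Y i ∨ Up (X i) (Y i)) : meas X ≤ meas Y := by
  refine Finset.sum_le_sum fun i _ => ?_
  rcases h i with he | hu
  · rw [he]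
  · exact le_of_lt (Fin.lt_def.mp hu.1)

theorem eq_of_meas_le {w : ℕ} {X Y : Fin w → Fin n × Fin n}
    (h : ∀ i, X i = Y i ∨ Up (X i) (Y i)) (hle : meas Y ≤ meas X) : X = Y := by
  by_contra hne
  have : ∃ i, X i ≠ Y i := by
    by_contra hc; push_neg at hc; exact hne (funext hc)
  obtain ⟨i0, hi0⟩ := this
  have hlt : meas X < meas Y := by
    refine Finset.sum_lt_sum (fun i _ => ?_) ⟨i0, Finset.mem_univ _, ?_⟩
    · rcases h i with he | hu
      · rw [he]
      · exact le_of_lt (Fin.lt_def.mp hu.1)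
    · rcases h i0 with he | hu
      · exact absurd he hi0
      · exact Fin.lt_def.mp hu.1
  omega


/-! #### The covering min–max lemma -/

/-- If `R` is a join/meet-closed family of `w`-antichains admitting no pointwise
strictly increasing sequence of `s+1` members, then `R` can be hit by `s` points. -/
theorem TD {w : ℕ} {P : Finset (Fin n × Fin n)} (hP1 : NoDChain P (w + 1))
    (hTri : ∀ e ∈ P, ∀ f ∈ P, e ≠ f → Up e f ∨ Up f e ∨ Down e f ∨ Down f e) :
    ∀ (s : ℕ) (R : Set (Fin w → Fin n × Fin n)),
      (∀ X ∈ R, IsAC P X) →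
      (∀ X ∈ R, ∀ Y ∈ R, jn X Y ∈ R) →
      (∀ X ∈ R, ∀ Y ∈ R, mt X Y ∈ R) →
      (¬ ∃ C : ℕ → Fin w → Fin n × Fin n,
          (∀ l, l ≤ s → C l ∈ R) ∧ ∀ l, l < s → ∀ i, Up (C l i) (C (l + 1) i)) →
      ∃ D : Finset (Fin n × Fin n), D.card ≤ s ∧ ∀ X ∈ R, ∃ i, X i ∈ D := by
  intro s
  induction s with
  | zero =>
    intro R hR _ _ hs
    refine ⟨∅, le_refl _, fun X hX => ?_⟩
    exact absurd ⟨fun _ => X, fun l _ => hX, fun l hl => absurd hl (Nat.not_lt_zero l)⟩ hs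
  | succ s IH =>
    intro R hR hjR hmR hs
    rcases Set.eq_empty_or_nonempty R with rfl | ⟨X0, hX0⟩
    · exact ⟨∅, by simp, by simp⟩
    have hfin : R.Finite := Set.toFinite R
    obtain ⟨b, hbR, hbmin⟩ := Set.exists_min_image R meas hfin ⟨X0, hX0⟩
    have hble : ∀ X ∈ R, ∀ i, b i = X i ∨ Up (b i) (X i) := by
      intro X hXR i
      have hmtR : mt b X ∈ R := hmR b hbR X hXR
      have h1 : ∀ i2, mt b X i2 = b i2 ∨ Up (mt b X i2) (b i2) :=
        mt_left hP1 hTri (hR b hbR) (hR X hXR)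
      have h1' : ∀ i2, mt b X i2 = b i2 ∨ Up (mt b X i2) (b i2) := h1
      have heq : mt b X = b := by
        refine eq_of_meas_le (fun i2 => ?_) (hbmin _ hmtR)
        rcases h1 i2 with h | h
        · exact Or.inl h
        · exact Or.inr h
      have h2 := mt_right (X := b) (Y := X) i
      rw [heq] at h2
      exact h2
    set Ms : Set (Fin w → Fin n × Fin n) := {X | X ∈ R ∧ ∀ i, Up (b i) (X i)} with hMs
    have hMsR : ∀ X ∈ Ms, X ∈ R := fun X hX => hX.1
    have hMchain : ¬ ∃ C : ℕ → Fin w → Fin n × Fin n,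
        (∀ l, l ≤ s → C l ∈ Ms) ∧ ∀ l, l < s → ∀ i, Up (C l i) (C (l + 1) i) := by
      rintro ⟨C, hC1, hC2⟩
      apply hs
      refine ⟨fun l => if l = 0 then b else C (l - 1), ?_, ?_⟩
      · intro l hl
        by_cases h : l = 0
        · simp only [h, if_pos]; exact hbR
        · simp only [h, if_neg, not_false_iff]
          exact hMsR _ (hC1 (l - 1) (by omega))
      · intro l hl i
        by_cases h : l = 0
        · subst h
          simp only [if_pos, if_neg, one_ne_zero, not_false_iff]
          exact (hC1 0 (Nat.zero_le _)).2 i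
        · have h1 : l + 1 ≠ 0 := by omega
          simp only [h, h1, if_neg, not_false_iff]
          have := hC2 (l - 1) (by omega) i
          have harith : l - 1 + 1 = l := by omega
          rw [harith] at this
          have harith2 : l + 1 - 1 = l := by omega
          rw [harith2]
          exact this
    have hMj : ∀ X ∈ Ms, ∀ Y ∈ Ms, jn X Y ∈ Ms := by
      intro X hX Y hY
      refine ⟨hjR X hX.1 Y hY.1, fun i => ?_⟩
      rcases jn_pair (X := X) (Y := Y) i with h | h <;> rw [h]
      exacts [hX.2 i, hY.2 i]
    have hMm : ∀ X ∈ Ms, ∀ Y ∈ Ms, mt X Y ∈ Ms := by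
      intro X hX Y hY
      refine ⟨hmR X hX.1 Y hY.1, fun i => ?_⟩
      rcases mt_pair (X := X) (Y := Y) i with h | h <;> rw [h]
      exacts [hX.2 i, hY.2 i]
    obtain ⟨D', hD'c, hD'hit⟩ := IH Ms (fun X hX => hR X (hMsR X hX)) hMj hMm hMchain
    by_cases hU : ∀ X ∈ R, ∃ i, X i ∈ D'
    · exact ⟨D', le_trans hD'c (Nat.le_succ s), hU⟩
    push_neg at hU
    obtain ⟨X1, hX1R, hX1un⟩ := hU
    set U : Set (Fin w → Fin n × Fin n) := {X | X ∈ R ∧ ∀ i, X i ∉ D'} with hUdef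
    have hX1U : X1 ∈ U := ⟨hX1R, hX1un⟩
    obtain ⟨J, hJU, hJmax⟩ := Set.exists_max_image U meas (Set.toFinite U) ⟨X1, hX1U⟩
    have hJub : ∀ X ∈ U, ∀ i, X i = J i ∨ Up (X i) (J i) := by
      intro X hXU i
      have hjnR : jn X J ∈ R := hjR X hXU.1 J hJU.1
      have hjnU : jn X J ∈ U := by
        refine ⟨hjnR, fun i2 => ?_⟩
        rcases jn_pair (X := X) (Y := J) i2 with h | h <;> rw [h]
        exacts [hXU.2 i2, hJU.2 i2]
      have h1 : ∀ i2, J i2 = jn X J i2 ∨ Up (J i2) (jn X J i2) :=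
        jn_right hP1 hTri (hR X hXU.1) (hR J hJU.1)
      have heq : J = jn X J := by
        refine eq_of_meas_le (fun i2 => h1 i2) (hJmax _ hjnU)
      have h2 := jn_left (X := X) (Y := J) i
      rw [← heq] at h2
      exact h2
    have hJnotM : J ∉ Ms := by
      intro hJM
      obtain ⟨i, hi⟩ := hD'hit J hJM
      exact hJU.2 i hi
    have hex : ∃ i0, b i0 = J i0 := by
      by_contra hc
      push_neg at hc
      refine hJnotM ⟨hJU.1, fun i => ?_⟩
      rcases hble J hJU.1 i with h | h
      · exact absurd h (hc i)
      · exact h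
    obtain ⟨i0, hi0⟩ := hex
    refine ⟨insert (b i0) D', ?_, ?_⟩
    · calc (insert (b i0) D').card ≤ D'.card + 1 := Finset.card_insert_le _ _
        _ ≤ s + 1 := by omega
    · intro X hXR
      by_cases hXhit : ∃ i, X i ∈ D'
      · obtain ⟨i, hi⟩ := hXhit
        exact ⟨i, Finset.mem_insert_of_mem hi⟩
      · push_neg at hXhit
        have hXU : X ∈ U := ⟨hXR, hXhit⟩
        have h1 := hJub X hXU i0
        have h2 := hble X hXR i0
        have hXb : X i0 = b i0 := by
          rcases h1 with h1 | h1
          · rw [h1, ← hi0]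
          · rcases h2 with h2 | h2
            · exact h2.symm
            · exact absurd (up_trans h2 (by rwa [hi0])) (fun h => up_irrefl h)
        exact ⟨i0, by rw [hXb]; exact Finset.mem_insert_self _ _⟩


/-! #### The key lemma -/

/-- If `A` is a maximum subset of `M.E` with no `Down`-chain of length `k+1`,
and the complement contains an `Up`-chain of length `k+1`, then `M` contains a
`(k+1)`-diamond. -/
theorem key (M : OGraph) (hm : M.IsMatching) (hsep : M.Separated) (k : ℕ)
    (hhigh : ¬ M.HasDiamond (k + 1)) (A : Finset (Fin M.n × Fin M.n))
    (hA : A ⊆ M.E) (hAadm : NoDChain A (k + 1))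
    (hAmax : ∀ S ⊆ M.E, NoDChain S (k + 1) → S.card ≤ A.card)
    (q : ℕ → Fin M.n × Fin M.n)
    (hqmem : ∀ l, l < k + 1 → q l ∈ M.E \ A)
    (hqchain : ∀ i j, i < j → j < k + 1 → Up (q i) (q j)) : False := by
  set w := k + 1 with hw
  set Qs : Finset (Fin M.n × Fin M.n) := (Finset.range w).image q with hQs
  set P : Finset (Fin M.n × Fin M.n) := A ∪ Qs with hPdef
  have hPE : P ⊆ M.E := by
    intro e he
    rcases Finset.mem_union.mp he with h | h
    · exact hA h
    · obtain ⟨l, hl, rfl⟩ := Finset.mem_image.mp h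
      exact (Finset.mem_sdiff.mp (hqmem l (Finset.mem_range.mp hl))).1
  have hQA : ∀ l, l < w → q l ∉ A := fun l hl => (Finset.mem_sdiff.mp (hqmem l hl)).2
  have hqinj : ∀ i j, i < w → j < w → q i = q j → i = j := by
    intro i j hi hj hij
    rcases Nat.lt_trichotomy i j with h | h | h
    · exact absurd (hqchain i j h hj) (by rw [hij]; exact fun hu => up_irrefl hu)
    · exact h
    · exact absurd (hqchain j i h hi) (by rw [hij]; exact fun hu => up_irrefl hu)
  have hQcard : Qs.card = w := by
    rw [hQs, Finset.card_image_of_injOn, Finset.card_range]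
    intro a ha b hb hab
    exact hqinj a b (Finset.mem_range.mp ha) (Finset.mem_range.mp hb) hab
  have hdisj : Disjoint A Qs := by
    rw [Finset.disjoint_right]
    intro e he
    obtain ⟨l, hl, rfl⟩ := Finset.mem_image.mp he
    exact hQA l (Finset.mem_range.mp hl)
  have hPcard : P.card = A.card + w := by
    rw [hPdef, Finset.card_union_of_disjoint hdisj, hQcard]
  have hqnd : ∀ a b, a < w → b < w → ¬ Down (q a) (q b) := by
    intro a b ha hb hd
    rcases Nat.lt_trichotomy a b with h | h | h
    · exact up_down (hqchain a b h hb) hd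
    · subst h; exact down_irrefl hd
    · exact up_down' (hqchain b a h ha) hd
  have hP1 : NoDChain P (w + 1) := by
    rintro ⟨g, hg1, hg2⟩
    have huniq : ∀ l1 l2, l1 < w + 1 → l2 < w + 1 → g l1 ∈ Qs → g l2 ∈ Qs → l1 = l2 := by
      intro l1 l2 h1 h2 hq1 hq2
      by_contra hne
      obtain ⟨a, ha, hga⟩ := Finset.mem_image.mp hq1
      obtain ⟨b, hb, hgb⟩ := Finset.mem_image.mp hq2
      have haw := Finset.mem_range.mp ha
      have hbw := Finset.mem_range.mp hb
      rcases Nat.lt_trichotomy l1 l2 with h | h | h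
      · have hd : Down (g l1) (g l2) := hg2 l1 l2 h h2
        rw [← hga, ← hgb] at hd
        exact hqnd a b haw hbw hd
      · exact hne h
      · have hd : Down (g l2) (g l1) := hg2 l2 l1 h h1
        rw [← hga, ← hgb] at hd
        exact hqnd b a hbw haw hd
    by_cases hexq : ∃ l, l < w + 1 ∧ g l ∈ Qs
    · obtain ⟨β, hβ, hβq⟩ := hexq
      have memA : ∀ l', l' < w + 1 → l' ≠ β → g l' ∈ A := by
        intro l' hl' hne
        rcases Finset.mem_union.mp (hg1 l' hl') with h | h
        · exact h
        · exact absurd (huniq l' β hl' hβ h hβq) hne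
      apply hAadm
      refine ⟨fun l => if l < β then g l else g (l + 1), ?_, ?_⟩
      · intro l hl
        by_cases h : l < β
        · simp only [h, if_pos]; exact memA l (by omega) (by omega)
        · simp only [h, if_neg, not_false_iff]; exact memA (l + 1) (by omega) (by omega)
      · intro i j hij hj
        by_cases hi' : i < β <;> by_cases hj' : j < β <;>
          simp only [hi', hj', if_pos, if_neg, not_false_iff]
        · exact hg2 i j hij (by omega)
        · exact hg2 i (j + 1) (by omega) (by omega)
        · exact absurd hj' (by omega)
        · exact hg2 (i + 1) (j + 1) (by omega) (by omega)
    · apply hAadm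
      refine ⟨g, fun l hl => ?_, fun i j hij hj => hg2 i j hij (by omega)⟩
      rcases Finset.mem_union.mp (hg1 l (by omega)) with h | h
      · exact h
      · exact absurd ⟨l, by omega, h⟩ hexq
  have hTri : ∀ e ∈ P, ∀ f ∈ P, e ≠ f → Up e f ∨ Up f e ∨ Down e f ∨ Down f e :=
    fun e he f hf hne => tri M hm (hPE he) (hPE hf) hne
  set R : Set (Fin w → Fin M.n × Fin M.n) := {X | IsAC P X} with hRdef
  have hF4 : ∀ D : Finset (Fin M.n × Fin M.n), D.card ≤ k → ∃ X ∈ R, ∀ i, X i ∉ D := by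
    intro D hD
    have hSsub : P \ D ⊆ M.E := fun e he => hPE (Finset.mem_sdiff.mp he).1
    have hScard : A.card < (P \ D).card := by
      have h1 : P.card - D.card ≤ (P \ D).card := Finset.le_card_sdiff D P
      omega
    have hnadm : ¬ NoDChain (P \ D) (k + 1) := by
      intro hadm
      exact absurd (hAmax _ hSsub hadm) (by omega)
    rw [NoDChain] at hnadm
    obtain ⟨g, hg1, hg2⟩ := not_not.mp hnadm
    refine ⟨fun i => g i, ⟨fun i => (Finset.mem_sdiff.mp (hg1 i i.isLt)).1,
      fun i j hij => hg2 i j (Fin.lt_def.mp hij) j.isLt⟩,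
      fun i => (Finset.mem_sdiff.mp (hg1 i i.isLt)).2⟩
  have hclosj : ∀ X ∈ R, ∀ Y ∈ R, jn X Y ∈ R := fun X hX Y hY => jn_isac hP1 hTri hX hY
  have hclosm : ∀ X ∈ R, ∀ Y ∈ R, mt X Y ∈ R := fun X hX Y hY => mt_isac hP1 hTri hX hY
  have hchain : ∃ C : ℕ → Fin w → Fin M.n × Fin M.n,
      (∀ l, l ≤ k → C l ∈ R) ∧ ∀ l, l < k → ∀ i, Up (C l i) (C (l + 1) i) := by
    by_contra hc
    obtain ⟨D, hDc, hDhit⟩ := TD hP1 hTri k R (fun X hX => hX) hclosj hclosm hc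
    obtain ⟨X, hXR, hXmiss⟩ := hF4 D hDc
    obtain ⟨i, hi⟩ := hDhit X hXR
    exact hXmiss i hi
  obtain ⟨C, hC1, hC2⟩ := hchain
  have hCpair : ∀ b, b ≤ k → ∀ a, a < b → ∀ i, Up (C a i) (C b i) := by
    intro b
    induction b with
    | zero => intro _ a ha; exact absurd ha (Nat.not_lt_zero a)
    | succ b IH =>
      intro hb a ha i
      rcases Nat.lt_or_ge a b with h | h
      · exact up_trans (IH (by omega) a h i) (hC2 b (by omega) i)
      · have haeq : a = b := by omega
        subst haeq
        exact hC2 a (by omega) i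
  have hCac : ∀ (j : ℕ), j ≤ k → IsAC P (C j) := fun j hj => hC1 j hj
  apply hhigh
  refine ⟨fun i j => C (j : ℕ) i, ?_, ?_, ?_, ?_⟩
  · intro i j
    exact hPE ((hCac (j : ℕ) (Nat.lt_succ_iff.mp j.isLt)).1 i)
  · rintro ⟨i, j⟩ ⟨i', j'⟩ hpe
    simp only at hpe
    rcases Nat.lt_trichotomy (j : ℕ) (j' : ℕ) with hj | hj | hj
    · exfalso
      have hU : Up (C (j : ℕ) i) (C (j' : ℕ) i) :=
        hCpair (j' : ℕ) (Nat.lt_succ_iff.mp j'.isLt) (j : ℕ) hj i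
      rcases lt_trichotomy i i' with hi | hi | hi
      · have hD : Down (C (j' : ℕ) i) (C (j' : ℕ) i') :=
          (hCac (j' : ℕ) (Nat.lt_succ_iff.mp j'.isLt)).2 i i' hi
        rw [← hpe] at hD
        exact up_down' hU hD
      · subst hi
        rw [hpe] at hU
        exact up_irrefl hU
      · have hD : Down (C (j' : ℕ) i') (C (j' : ℕ) i) :=
          (hCac (j' : ℕ) (Nat.lt_succ_iff.mp j'.isLt)).2 i' i hi
        rw [← hpe] at hD
        exact up_down hU hD
    · have hjj : j = j' := Fin.ext hj
      subst hjj
      rcases lt_trichotomy i i' with hi | hi | hi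
      · exfalso
        have hD : Down (C (j : ℕ) i) (C (j : ℕ) i') :=
          (hCac (j : ℕ) (Nat.lt_succ_iff.mp j.isLt)).2 i i' hi
        rw [hpe] at hD
        exact down_irrefl hD
      · rw [hi]
      · exfalso
        have hD : Down (C (j : ℕ) i') (C (j : ℕ) i) :=
          (hCac (j : ℕ) (Nat.lt_succ_iff.mp j.isLt)).2 i' i hi
        rw [hpe] at hD
        exact down_irrefl hD
    · exfalso
      have hU : Up (C (j' : ℕ) i') (C (j : ℕ) i') :=
        hCpair (j : ℕ) (Nat.lt_succ_iff.mp j.isLt) (j' : ℕ) hj i'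
      rcases lt_trichotomy i i' with hi | hi | hi
      · have hD : Down (C (j : ℕ) i) (C (j : ℕ) i') :=
          (hCac (j : ℕ) (Nat.lt_succ_iff.mp j.isLt)).2 i i' hi
        rw [hpe] at hD
        exact up_down hU hD
      · subst hi
        rw [hpe] at hU
        exact up_irrefl hU
      · have hD : Down (C (j : ℕ) i') (C (j : ℕ) i) :=
          (hCac (j : ℕ) (Nat.lt_succ_iff.mp j.isLt)).2 i' i hi
        rw [hpe] at hD
        exact up_down' hU hD
  · intro i j j' hjj
    exact hCpair (j' : ℕ) (Nat.lt_succ_iff.mp j'.isLt) (j : ℕ) (Fin.lt_def.mp hjj) i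
  · intro j i i' hii
    exact (hCac (j : ℕ) (Nat.lt_succ_iff.mp j.isLt)).2 i i' hii


/-! #### The layout -/

theorem layout (M : OGraph) (hm : M.IsMatching) (k : ℕ) (hk : 1 ≤ k)
    (A : Finset (Fin M.n × Fin M.n)) (hA : A ⊆ M.E) (hAadm : NoDChain A (k + 1))
    (hB : NoUChain (M.E \ A) (k + 1)) : M.HasLayout k k := by
  classical
  refine ⟨fun e => if e ∈ A then k + (dh A e - 1) else (uh (M.E \ A) e - 1), ?_, ?_⟩
  · intro e he
    by_cases h : e ∈ A
    · simp only [h, if_pos]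
      have h1 := dh_le A hAadm h
      have h2 := dh_pos A e
      omega
    · simp only [h, if_neg, not_false_iff]
      have hmem : e ∈ M.E \ A := Finset.mem_sdiff.mpr ⟨he, h⟩
      have h1 := uh_le (M.E \ A) hB hmem
      have h2 := uh_pos (M.E \ A) e
      omega
  · intro e he f hf hcef
    by_cases hea : e ∈ A <;> by_cases hfa : f ∈ A <;>
      simp only [hea, hfa, if_pos, if_neg, not_false_iff] at hcef ⊢
    · -- both in A: queue side
      constructor
      · intro hlt
        exact absurd hlt (by have := dh_pos A e; omega)
      · intro _
        have h1 := dh_pos A e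
        have h2 := dh_pos A f
        have hdeq : dh A e = dh A f := by omega
        by_cases hef : e = f
        · subst hef; exact not_nest_self
        rcases tri M hm (hA hea) (hA hfa) hef with h | h | h | h
        · exact up_not_nest h
        · exact up_not_nest' h
        · exact absurd hdeq (by have h3 := dh_lt A hea h; omega)
        · exact absurd hdeq (by have h3 := dh_lt A hfa h; omega)
    · -- e ∈ A, f ∉ A: impossible page equality
      have h1 := dh_pos A e
      have h2 := uh_le (M.E \ A) hB (Finset.mem_sdiff.mpr ⟨hf, hfa⟩)
      exact absurd hcef (by omega)
    · -- e ∉ A, f ∈ A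
      have h1 := dh_pos A f
      have h2 := uh_le (M.E \ A) hB (Finset.mem_sdiff.mpr ⟨he, hea⟩)
      exact absurd hcef (by omega)
    · -- both in B: stack side
      have hemem : e ∈ M.E \ A := Finset.mem_sdiff.mpr ⟨he, hea⟩
      have hfmem : f ∈ M.E \ A := Finset.mem_sdiff.mpr ⟨hf, hfa⟩
      constructor
      · intro _
        have h1 := uh_pos (M.E \ A) e
        have h2 := uh_pos (M.E \ A) f
        have hueq : uh (M.E \ A) e = uh (M.E \ A) f := by omega
        by_cases hef : e = f
        · subst hef; exact not_cross_self
        rcases tri M hm he hf hef with h | h | h | h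
        · exact absurd hueq (by have h3 := uh_lt (M.E \ A) hemem h; omega)
        · exact absurd hueq (by have h3 := uh_lt (M.E \ A) hfmem h; omega)
        · exact down_not_cross h
        · exact down_not_cross' h
      · intro hge
        have h1 := uh_le (M.E \ A) hB hemem
        have h2 := uh_pos (M.E \ A) e
        exact absurd hge (by omega)

end Aux

/-- If the largest ⋄-pattern in a separated matching `M` has
size `k × k`, then `k ≤ mn(M) ≤ 2k`. -/
theorem diamond_bounds_mixed_page_number (M : OGraph) (k : ℕ)
    (hmatch : M.IsMatching) (hsep : M.Separated)
    (hlow : M.HasDiamond k) (hhigh : ¬ M.HasDiamond (k + 1)) :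
    k ≤ M.mn ∧ M.mn ≤ 2 * k := by
  classical
  by_cases hk0 : k = 0
  · subst hk0
    have hE : M.E = ∅ := by
      by_contra hne
      obtain ⟨e0, he0⟩ := Finset.nonempty_iff_ne_empty.mpr hne
      apply hhigh
      refine ⟨fun _ _ => e0, fun _ _ => he0, fun a b _ => ?_, ?_, ?_⟩
      · have h1 := a.1.isLt
        have h2 := b.1.isLt
        have h3 := a.2.isLt
        have h4 := b.2.isLt
        exact Prod.ext (Fin.ext (by omega)) (Fin.ext (by omega))
      · intro i j j' hjj
        have h1 := j.isLt
        have h2 := j'.isLt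
        exact absurd hjj (by rw [Fin.lt_def]; omega)
      · intro j i i' hii
        have h1 := i.isLt
        have h2 := i'.isLt
        exact absurd hii (by rw [Fin.lt_def]; omega)
    have hmem0 : 0 ∈ {m | ∃ s q, s + q = m ∧ M.HasLayout s q} :=
      ⟨0, 0, rfl, ⟨fun _ => 0, by simp [hE], by simp [hE]⟩⟩
    refine ⟨Nat.zero_le _, ?_⟩
    show M.mn ≤ 2 * 0
    rw [OGraph.mn]
    simpa using Nat.sInf_le hmem0
  · have hk : 1 ≤ k := Nat.one_le_iff_ne_zero.mpr hk0
    have hfamne : (M.E.powerset.filter fun S => Aux.NoDChain S (k + 1)).Nonempty := by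
      refine ⟨∅, Finset.mem_filter.mpr ⟨Finset.mem_powerset.mpr (Finset.empty_subset _), ?_⟩⟩
      rintro ⟨g, hg1, -⟩
      exact absurd (hg1 0 (by omega)) (by simp)
    obtain ⟨A, hAmem, hAmax'⟩ := Finset.exists_max_image _ (fun S => S.card) hfamne
    have hAE : A ⊆ M.E := Finset.mem_powerset.mp (Finset.mem_filter.mp hAmem).1
    have hAadm : Aux.NoDChain A (k + 1) := (Finset.mem_filter.mp hAmem).2
    have hAmax : ∀ S ⊆ M.E, Aux.NoDChain S (k + 1) → S.card ≤ A.card := by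
      intro S hS hSadm
      exact hAmax' S (Finset.mem_filter.mpr ⟨Finset.mem_powerset.mpr hS, hSadm⟩)
    have hB : Aux.NoUChain (M.E \ A) (k + 1) := by
      rintro ⟨g, hg1, hg2⟩
      exact Aux.key M hmatch hsep k hhigh A hAE hAadm hAmax g hg1 hg2
    have hlay : M.HasLayout k k := Aux.layout M hmatch k hk A hAE hAadm hB
    have hmem2k : 2 * k ∈ {m | ∃ s q, s + q = m ∧ M.HasLayout s q} :=
      ⟨k, k, by ring, hlay⟩
    constructor
    · -- lower bound
      have hSne : {m | ∃ s q, s + q = m ∧ M.HasLayout s q}.Nonempty := ⟨2 * k, hmem2k⟩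
      have hmn : M.mn ∈ {m | ∃ s q, s + q = m ∧ M.HasLayout s q} := by
        rw [OGraph.mn]
        exact Nat.sInf_mem hSne
      obtain ⟨s, qq, hsq, c, hc1, hc2⟩ := hmn
      rw [← hsq]
      rcases hlow with ⟨e, hmemE, hinj, hrow, hcol⟩
      have hFinj : Function.Injective (fun p : Fin k × Fin k =>
          ((⟨c (e p.1 p.2), hc1 _ (hmemE p.1 p.2)⟩ : Fin (s + qq)),
           (if c (e p.1 p.2) < s then p.1 else p.2))) := by
        rintro ⟨i, j⟩ ⟨i', j'⟩ hp
        simp only [Prod.mk.injEq, Fin.mk.injEq] at hp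
        obtain ⟨hpage, hsnd⟩ := hp
        by_cases hlt : c (e i j) < s
        · have hlt' : c (e i' j') < s := by rw [← hpage]; exact hlt
          rw [if_pos hlt, if_pos hlt'] at hsnd
          subst hsnd
          have hjj : j = j' := by
            by_contra hne
            rcases lt_or_gt_of_ne hne with h | h
            · have hup := hrow i j j' h
              have hcr := Aux.up_cross M hsep (hmemE i j) (hmemE i j') hup
              exact (hc2 _ (hmemE i j) _ (hmemE i j') hpage).1 hlt hcr
            · have hup := hrow i j' j h
              have hcr := Aux.up_cross M hsep (hmemE i j') (hmemE i j) hup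
              exact (hc2 _ (hmemE i j') _ (hmemE i j) hpage.symm).1 hlt' hcr
          rw [hjj]
        · have hge : s ≤ c (e i j) := Nat.le_of_not_lt hlt
          have hlt' : ¬ c (e i' j') < s := by rw [← hpage]; exact hlt
          rw [if_neg hlt, if_neg hlt'] at hsnd
          subst hsnd
          have hii : i = i' := by
            by_contra hne
            rcases lt_or_gt_of_ne hne with h | h
            · have hdn := hcol j i i' h
              exact (hc2 _ (hmemE i j) _ (hmemE i' j) hpage).2 hge (Aux.down_nest hdn)
            · have hdn := hcol j i' i h
              exact (hc2 _ (hmemE i' j) _ (hmemE i j) hpage.symm).2 (by omega)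
                (Aux.down_nest hdn)
          rw [hii]
      have hcard := Fintype.card_le_of_injective _ hFinj
      simp only [Fintype.card_prod, Fintype.card_fin] at hcard
      exact Nat.le_of_mul_le_mul_right hcard hk
    · show M.mn ≤ 2 * k
      rw [OGraph.mn]
      exact Nat.sInf_le hmem2k

end MixedLayouts
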